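/- If moreover ‖u‖ = ‖u_k^h‖ = 1 and ⟨Πu, u_k^h⟩ ≥ 0, then ‖u − u_k^h‖ ≤ 2(1 + ρ)‖u − Πu‖, where ρ = max_{j ≠ k} |λ| / |λ − λ_j^h|. -/
import Mathlib


open scoped RealInnerProductSpace

/-- in the setting of Statement 12, if moreover
`‖u‖ = ‖u_k^h‖ = 1` and `⟨Πu, u_k^h⟩ ≥ 0`, then
`‖u − u_k^h‖ ≤ 2(1 + ρ)‖u − Πu‖`, where `ρ = max_{j≠k} |λ|/|λ − λ_j^h|`
(formalized as: `ρ ≥ 0` is any upper bound of the quotients). -/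
theorem stmt_14 {V : Type*} [NormedAddCommGroup V] [InnerProductSpace ℝ V]
    {n : ℕ} (B : V →ₗ[ℝ] V →ₗ[ℝ] ℝ)
    (hsymm : ∀ x y : V, B x y = B y x)
    (W : Submodule ℝ V) (uh : Fin n → V) (lamh : Fin n → ℝ)
    (huhW : ∀ j, uh j ∈ W) (hon : Orthonormal ℝ uh)
    (hspan : Submodule.span ℝ (Set.range uh) = W)
    (heig : ∀ w ∈ W, ∀ j, B w (uh j) = lamh j * ⟪w, uh j⟫)
    (u : V) (lam : ℝ) (hu : ∀ w ∈ W, B u w = lam * ⟪u, w⟫)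
    (Pu : V) (hPu : Pu ∈ W) (hritz : ∀ w ∈ W, B (u - Pu) w = 0)
    (k : Fin n) (hk : ∀ j, j ≠ k → lam ≠ lamh j)
    (ρ : ℝ) (hρ0 : 0 ≤ ρ)
    (hρ : ∀ j, j ≠ k → |lam| / |lam - lamh j| ≤ ρ)
    (hnormu : ‖u‖ = 1) (hnormuh : ‖uh k‖ = 1)
    (hpos : 0 ≤ ⟪Pu, uh k⟫) :
    ‖u - uh k‖ ≤ 2 * (1 + ρ) * ‖u - Pu‖ := by
  classical
  set c : Fin n → ℝ := fun j => ⟪Pu, uh j⟫ with hc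
  -- Pu is the sum of its coefficients
  have hPusum : Pu = ∑ j, c j • uh j := by
    set v := Pu - ∑ j, c j • uh j with hv
    have hvj : ∀ j, ⟪uh j, v⟫ = 0 := by
      intro j
      rw [hv, inner_sub_right, hon.inner_right_fintype c j, real_inner_comm]
      simp [hc]
    have hvmem : v ∈ Submodule.span ℝ (Set.range uh) := by
      rw [hspan]
      exact Submodule.sub_mem _ hPu
        (Submodule.sum_mem _ fun j _ => Submodule.smul_mem _ _ (huhW j))
    have horth : ∀ x ∈ Submodule.span ℝ (Set.range uh), ⟪x, v⟫ = 0 := by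
      intro x hx
      induction hx using Submodule.span_induction with
      | mem x hx =>
        obtain ⟨j, rfl⟩ := hx
        exact hvj j
      | zero => simp
      | add x y _ _ hx hy => rw [inner_add_left, hx, hy, add_zero]
      | smul a x _ hx => rw [inner_smul_left, hx, mul_zero]
    have hvv : ⟪v, v⟫ = 0 := horth v hvmem
    have : v = 0 := by
      rwa [inner_self_eq_zero] at hvv
    rw [hv, sub_eq_zero] at this
    exact this
  -- eigenvalue relation for coefficients
  have heq : ∀ j, (lamh j - lam) * c j = lam * ⟪u - Pu, uh j⟫ := by
    intro j
    have h1 := heig Pu hPu j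
    have h2 := hritz (uh j) (huhW j)
    have h3 := hu (uh j) (huhW j)
    rw [map_sub, LinearMap.sub_apply, sub_eq_zero, h3, h1] at h2
    have h4 : ⟪u - Pu, uh j⟫ = ⟪u, uh j⟫ - c j := by rw [inner_sub_left]
    rw [h4]
    -- h2 : lam * ⟪u, uh j⟫ = lamh j * c j
    nlinarith [h2]
  have hcbound : ∀ j, j ≠ k → |c j| ≤ ρ * |⟪u - Pu, uh j⟫| := by
    intro j hj
    have hne : lam - lamh j ≠ 0 := sub_ne_zero.mpr (hk j hj)
    have hpos' : 0 < |lam - lamh j| := abs_pos.mpr hne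
    have h5 : |lam - lamh j| * |c j| = |lam| * |⟪u - Pu, uh j⟫| := by
      have := heq j
      have h6 : |(lamh j - lam) * c j| = |lam * ⟪u - Pu, uh j⟫| := by rw [this]
      rw [abs_mul, abs_mul, abs_sub_comm] at h6
      exact h6
    have h7 : |c j| = |lam| / |lam - lamh j| * |⟪u - Pu, uh j⟫| := by
      field_simp
      linarith [h5]
    rw [h7]
    exact mul_le_mul_of_nonneg_right (hρ j hj) (abs_nonneg _)
  -- key estimate
  have hkey : ‖Pu - c k • uh k‖ ≤ ρ * ‖u - Pu‖ := by
    have hrepr : Pu - c k • uh k = ∑ j ∈ Finset.univ.erase k, c j • uh j := by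
      rw [hPusum]
      rw [← Finset.sum_erase_add _ _ (Finset.mem_univ k)]
      abel
    have hsq : ‖Pu - c k • uh k‖ ^ 2 = ∑ j ∈ Finset.univ.erase k, (c j) ^ 2 := by
      rw [hrepr, ← real_inner_self_eq_norm_sq, hon.inner_sum c c]
      simp [sq]
    have hsum1 : ∑ j ∈ Finset.univ.erase k, (c j) ^ 2
        ≤ ρ ^ 2 * ∑ j ∈ Finset.univ.erase k, ⟪u - Pu, uh j⟫ ^ 2 := by
      rw [Finset.mul_sum]
      apply Finset.sum_le_sum
      intro j hj
      have hj' : j ≠ k := Finset.ne_of_mem_erase hj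
      have := hcbound j hj'
      have h1 : (c j) ^ 2 = |c j| ^ 2 := (sq_abs _).symm
      have h2 : ⟪u - Pu, uh j⟫ ^ 2 = |⟪u - Pu, uh j⟫| ^ 2 := (sq_abs _).symm
      rw [h1, h2]
      nlinarith [abs_nonneg (c j), abs_nonneg (⟪u - Pu, uh j⟫ : ℝ)]
    have hbessel : ∑ j ∈ Finset.univ.erase k, ⟪u - Pu, uh j⟫ ^ 2 ≤ ‖u - Pu‖ ^ 2 := by
      have := hon.sum_inner_products_le (s := Finset.univ.erase k) (u - Pu)
      calc ∑ j ∈ Finset.univ.erase k, ⟪u - Pu, uh j⟫ ^ 2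
          = ∑ j ∈ Finset.univ.erase k, ‖(⟪uh j, u - Pu⟫ : ℝ)‖ ^ 2 := by
            apply Finset.sum_congr rfl
            intro j _
            rw [real_inner_comm, Real.norm_eq_abs, sq_abs]
        _ ≤ ‖u - Pu‖ ^ 2 := this
    have hsq2 : ‖Pu - c k • uh k‖ ^ 2 ≤ (ρ * ‖u - Pu‖) ^ 2 := by
      rw [hsq, mul_pow]
      calc ∑ j ∈ Finset.univ.erase k, (c j) ^ 2
          ≤ ρ ^ 2 * ∑ j ∈ Finset.univ.erase k, ⟪u - Pu, uh j⟫ ^ 2 := hsum1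
        _ ≤ ρ ^ 2 * ‖u - Pu‖ ^ 2 := by
            apply mul_le_mul_of_nonneg_left hbessel (sq_nonneg ρ)
    nlinarith [norm_nonneg (Pu - c k • uh k), mul_nonneg hρ0 (norm_nonneg (u - Pu))]
  -- assemble
  have h8 : ‖u - c k • uh k‖ ≤ (1 + ρ) * ‖u - Pu‖ := by
    calc ‖u - c k • uh k‖ ≤ ‖u - Pu‖ + ‖Pu - c k • uh k‖ := by
          have : u - c k • uh k = (u - Pu) + (Pu - c k • uh k) := by abel
          rw [this]; exact norm_add_le _ _
      _ ≤ ‖u - Pu‖ + ρ * ‖u - Pu‖ := by linarith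
      _ = (1 + ρ) * ‖u - Pu‖ := by ring
  have h9 : |c k - 1| ≤ ‖u - c k • uh k‖ := by
    have h10 := abs_norm_sub_norm_le (c k • uh k) u
    rw [norm_smul, hnormuh, hnormu, Real.norm_eq_abs, mul_one,
      abs_of_nonneg hpos] at h10
    calc |c k - 1| ≤ ‖c k • uh k - u‖ := h10
      _ = ‖u - c k • uh k‖ := by rw [norm_sub_rev]
  have h11 : ‖u - uh k‖ ≤ ‖u - c k • uh k‖ + |c k - 1| := by
    calc ‖u - uh k‖ ≤ ‖u - c k • uh k‖ + ‖c k • uh k - uh k‖ := by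
          have : u - uh k = (u - c k • uh k) + (c k • uh k - uh k) := by abel
          rw [this]; exact norm_add_le _ _
      _ = ‖u - c k • uh k‖ + |c k - 1| := by
          congr 1
          rw [show c k • uh k - uh k = (c k - 1) • uh k by rw [sub_smul, one_smul],
            norm_smul, hnormuh, Real.norm_eq_abs, mul_one]
  calc ‖u - uh k‖ ≤ ‖u - c k • uh k‖ + |c k - 1| := h11
    _ ≤ 2 * ‖u - c k • uh k‖ := by linarith
    _ ≤ 2 * ((1 + ρ) * ‖u - Pu‖) := by linarith
    _ = 2 * (1 + ρ) * ‖u - Pu‖ := by ring
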